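/- Let λ > 1, 0 ≤ ε < 1, 0 ≤ p < 1, and N ≥ 2 real. Define η taking value (λ+ε) with probability p and (λ + (N−1)ε)/N with probability 1−p. Then E[η²] < 1 if and only if N > (λ−ε)√(1−p) / (√(1 − p(λ+ε)²) − ε√(1−p)) and p < (1−ε²)/((λ+ε)² − ε²). -/

import Mathlib

set_option maxHeartbeats 1000000 in
theorem second_moment_lt_one_iff_case_large_N
    (l ε p N : ℝ) (hl : 1 < l) (hε0 : 0 ≤ ε) (hε1 : ε < 1)
    (hp0 : 0 ≤ p) (hp1 : p < 1) (hN : 2 ≤ N) :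
    p * (l + ε)^2 + (1 - p) * ((l + (N - 1) * ε) / N)^2 < 1 ↔
      (N > (l - ε) * Real.sqrt (1 - p) /
            (Real.sqrt (1 - p * (l + ε)^2) - ε * Real.sqrt (1 - p)) ∧
       p < (1 - ε^2) / ((l + ε)^2 - ε^2)) := by
  have hN0 : (0:ℝ) < N := by linarith
  have hlε : ε < l := by linarith
  have hp' : (0:ℝ) < 1 - p := by linarith
  have hd : (0:ℝ) < (l + ε)^2 - ε^2 := by nlinarith
  set s := Real.sqrt (1 - p) with hs
  have hs2 : s^2 = 1 - p := Real.sq_sqrt hp'.le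
  have hspos : 0 < s := Real.sqrt_pos.mpr hp'
  have hnum : 0 < l + (N-1)*ε := by nlinarith
  by_cases hC : 1 - p * (l + ε)^2 ≤ 0
  · constructor
    · intro h
      exfalso
      have hq : 0 < (l + (N-1)*ε)/N := div_pos hnum hN0
      nlinarith [mul_pos hp' (mul_pos hq hq)]
    · rintro ⟨_, h2⟩
      exfalso
      rw [lt_div_iff₀ hd] at h2
      nlinarith
  · push_neg at hC
    set t := Real.sqrt (1 - p * (l+ε)^2) with ht
    have ht2 : t^2 = 1 - p*(l+ε)^2 := Real.sq_sqrt hC.le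
    have htpos : 0 < t := Real.sqrt_pos.mpr hC
    have hN2 : (0:ℝ) < N^2 := by positivity
    have key : (p * (l + ε)^2 + (1 - p) * ((l + (N - 1) * ε) / N)^2 < 1)
        ↔ (l - ε) * s < N * (t - ε * s) := by
      rw [div_pow, mul_div_assoc']
      rw [show (p*(l+ε)^2 + (1-p)*(l+(N-1)*ε)^2/N^2 < 1)
          ↔ ((1-p)*(l+(N-1)*ε)^2/N^2 < 1 - p*(l+ε)^2) from by
        constructor <;> intro <;> linarith]
      rw [div_lt_iff₀ hN2]
      have h1 : (1-p)*(l+(N-1)*ε)^2 = (s*(l+(N-1)*ε))^2 := by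
        rw [mul_pow, hs2]
      have h2 : (1 - p*(l+ε)^2)*N^2 = (N*t)^2 := by
        rw [mul_pow, ht2]; ring
      rw [h1, h2]
      rw [pow_lt_pow_iff_left₀ (by positivity) (by positivity) (two_ne_zero)]
      constructor <;> intro h <;> nlinarith
    rw [key]
    constructor
    · intro h
      have hls : 0 < (l - ε) * s := mul_pos (by linarith) hspos
      have hD : 0 < t - ε * s := by nlinarith
      constructor
      · rw [gt_iff_lt, div_lt_iff₀ hD]
        linarith [h]
      · rw [lt_div_iff₀ hd]
        have hsum : (0:ℝ) < t + ε * s := by nlinarith [mul_nonneg hε0 hspos.le]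
        nlinarith [mul_pos hD hsum]
    · rintro ⟨h1, h2⟩
      rw [lt_div_iff₀ hd] at h2
      have hsq : (ε * s)^2 < t^2 := by rw [mul_pow, hs2, ht2]; nlinarith [h2]
      have hεst : ε * s < t := lt_of_pow_lt_pow_left₀ 2 htpos.le hsq
      have hD : 0 < t - ε * s := by linarith
      rw [gt_iff_lt, div_lt_iff₀ hD] at h1
      linarith
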